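/- There exists a family A = {f_1, …, f_{λ+1}} of λ+1 maximum (s,t)-flows of G such that for every non-critical edge e ∈ E there is an index i ∈ {1, …, λ+1} with f_i(e) = 0. -/

import Mathlib

open Finset

/-- A finite directed multigraph on vertex type `V` with edge type `E`:
each edge `e` has a source `src e` and a target `tgt e`. -/
structure Digraph' (V E : Type) where
  src : E → V
  tgt : E → V

namespace Digraph'

variable {V E : Type} [Fintype V] [DecidableEq V] [Fintype E] [DecidableEq E]

/-- `h : E → ℕ` satisfies flow conservation at every vertex other than `s` and `t`:
the sum over incoming edges equals the sum over outgoing edges. -/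
def Conserves (G : Digraph' V E) (s t : V) (h : E → ℕ) : Prop :=
  ∀ v : V, v ≠ s → v ≠ t →
    ∑ e ∈ univ.filter (fun e => G.tgt e = v), h e =
      ∑ e ∈ univ.filter (fun e => G.src e = v), h e

/-- The value of `h`: the net flow out of `s`. -/
def flowValue (G : Digraph' V E) (s : V) (h : E → ℕ) : ℤ :=
  (∑ e ∈ univ.filter (fun e => G.src e = s), (h e : ℤ)) -
    ∑ e ∈ univ.filter (fun e => G.tgt e = s), (h e : ℤ)

/-- An `(s,t)`-flow of a unit-capacity digraph: a `{0,1}`-valued function on edges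
satisfying flow conservation at every vertex other than `s` and `t`. -/
def IsFlow (G : Digraph' V E) (s t : V) (f : E → ℕ) : Prop :=
  (∀ e, f e ≤ 1) ∧ G.Conserves s t f

/-- One step along an edge not belonging to `F`. -/
def stepAvoid (G : Digraph' V E) (F : Finset E) (u v : V) : Prop :=
  ∃ e, e ∉ F ∧ G.src e = u ∧ G.tgt e = v

/-- Reachability by a directed path using no edge of `F`. -/
def ReachAvoid (G : Digraph' V E) (F : Finset E) : V → V → Prop :=
  Relation.ReflTransGen (G.stepAvoid F)

/-- `C` is an `(s,t)`-cut: after deleting the edges of `C` there is no directed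
path from `s` to `t`. -/
def IsCut (G : Digraph' V E) (s t : V) (C : Finset E) : Prop :=
  ¬ G.ReachAvoid C s t

/-- An `(s,t)`-min-cut: an `(s,t)`-cut of minimum cardinality. -/
def IsMinCut (G : Digraph' V E) (s t : V) (C : Finset E) : Prop :=
  G.IsCut s t C ∧ ∀ C' : Finset E, G.IsCut s t C' → C.card ≤ C'.card

/-- A minimal `(s,t)`-cut: no proper subset of it is an `(s,t)`-cut. -/
def IsMinimalCut (G : Digraph' V E) (s t : V) (C : Finset E) : Prop :=
  G.IsCut s t C ∧ ∀ C' : Finset E, C' ⊂ C → ¬ G.IsCut s t C'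

/-- An edge is critical if it belongs to some `(s,t)`-min-cut. -/
def Critical (G : Digraph' V E) (s t : V) (e : E) : Prop :=
  ∃ C : Finset E, G.IsMinCut s t C ∧ e ∈ C

/-- `m` is the maximum `(s,t)`-flow value of `G − F`, i.e. the largest value of an
`(s,t)`-flow of `G` vanishing on every edge of `F`. -/
def IsMaxFlowValue (G : Digraph' V E) (s t : V) (F : Finset E) (m : ℤ) : Prop :=
  (∃ f, G.IsFlow s t f ∧ (∀ e ∈ F, f e = 0) ∧ G.flowValue s f = m) ∧
    ∀ f, G.IsFlow s t f → (∀ e ∈ F, f e = 0) → G.flowValue s f ≤ m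

/-- The residual graph `G_f` of a `{0,1}`-flow `f`: each edge with `f e = 1`
is reversed, each edge with `f e = 0` is kept as is. -/
def residual (G : Digraph' V E) (f : E → ℕ) : Digraph' V E where
  src e := if f e = 1 then G.tgt e else G.src e
  tgt e := if f e = 1 then G.src e else G.tgt e

end Digraph'

set_option linter.unusedSectionVars false

namespace StmtAux
open Digraph'
variable {V E : Type} [Fintype V] [DecidableEq V] [Fintype E] [DecidableEq E]

def exc (G : Digraph' V E) (F : E → ℕ) (v : V) : ℤ :=
  (∑ e ∈ univ.filter (fun e => G.src e = v), (F e : ℤ)) -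
    ∑ e ∈ univ.filter (fun e => G.tgt e = v), (F e : ℤ)

lemma flowValue_eq_exc (G : Digraph' V E) (s : V) (F : E → ℕ) :
    G.flowValue s F = exc G F s := rfl

lemma conserves_iff_exc (G : Digraph' V E) (s t : V) (F : E → ℕ) :
    G.Conserves s t F ↔ ∀ v, v ≠ s → v ≠ t → exc G F v = 0 := by
  unfold Digraph'.Conserves exc
  constructor
  · intro h v hs ht
    rw [← Nat.cast_sum, ← Nat.cast_sum, h v hs ht, sub_self]
  · intro h v hs ht
    have h2 := h v hs ht
    rw [sub_eq_zero] at h2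
    exact_mod_cast h2.symm

lemma sum_exc_eq_cross (G : Digraph' V E) (F : E → ℕ) (S : Finset V) :
    ∑ v ∈ S, exc G F v =
      (∑ e ∈ univ.filter (fun e => G.src e ∈ S ∧ G.tgt e ∉ S), (F e : ℤ)) -
        ∑ e ∈ univ.filter (fun e => G.src e ∉ S ∧ G.tgt e ∈ S), (F e : ℤ) := by
  classical
  have hsrc : ∑ v ∈ S, ∑ e ∈ univ.filter (fun e => G.src e = v), (F e : ℤ)
      = ∑ e ∈ univ.filter (fun e => G.src e ∈ S), (F e : ℤ) :=
    Finset.sum_fiberwise_eq_sum_filter univ S G.src _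
  have htgt : ∑ v ∈ S, ∑ e ∈ univ.filter (fun e => G.tgt e = v), (F e : ℤ)
      = ∑ e ∈ univ.filter (fun e => G.tgt e ∈ S), (F e : ℤ) :=
    Finset.sum_fiberwise_eq_sum_filter univ S G.tgt _
  have hs : ∑ e ∈ univ.filter (fun e => G.src e ∈ S), (F e : ℤ)
      = (∑ e ∈ univ.filter (fun e => G.src e ∈ S ∧ G.tgt e ∈ S), (F e : ℤ))
        + ∑ e ∈ univ.filter (fun e => G.src e ∈ S ∧ G.tgt e ∉ S), (F e : ℤ) := by
    rw [← Finset.sum_filter_add_sum_filter_not (univ.filter (fun e => G.src e ∈ S))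
      (fun e => G.tgt e ∈ S) (fun e => (F e : ℤ))]
    simp only [Finset.filter_filter]
  have ht : ∑ e ∈ univ.filter (fun e => G.tgt e ∈ S), (F e : ℤ)
      = (∑ e ∈ univ.filter (fun e => G.src e ∈ S ∧ G.tgt e ∈ S), (F e : ℤ))
        + ∑ e ∈ univ.filter (fun e => G.src e ∉ S ∧ G.tgt e ∈ S), (F e : ℤ) := by
    rw [← Finset.sum_filter_add_sum_filter_not (univ.filter (fun e => G.tgt e ∈ S))
      (fun e => G.src e ∈ S) (fun e => (F e : ℤ))]
    simp only [Finset.filter_filter]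
    congr 1
    · congr 1; ext e; simp [and_comm]
    · congr 1; ext e; simp [and_comm]
  unfold exc
  rw [Finset.sum_sub_distrib, hsrc, htgt, hs, ht]
  ring

lemma sum_exc_conserves (G : Digraph' V E) {s t : V} {F : E → ℕ} (hF : G.Conserves s t F)
    (hst : s ≠ t) (S : Finset V) :
    ∑ v ∈ S, exc G F v
      = (if s ∈ S then exc G F s else 0) + (if t ∈ S then exc G F t else 0) := by
  have h := (conserves_iff_exc G s t F).1 hF
  calc ∑ v ∈ S, exc G F v
      = ∑ v ∈ S, ((if v = s then exc G F s else 0) + (if v = t then exc G F t else 0)) := by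
        refine Finset.sum_congr rfl fun v _ => ?_
        by_cases h1 : v = s
        · subst h1; simp [hst]
        · by_cases h2 : v = t
          · subst h2; simp [h1]
          · simp [h1, h2, h v h1 h2]
    _ = _ := by
        rw [Finset.sum_add_distrib, Finset.sum_ite_eq' S s, Finset.sum_ite_eq' S t]

lemma exc_t (G : Digraph' V E) {s t : V} {F : E → ℕ} (hF : G.Conserves s t F) (hst : s ≠ t) :
    exc G F t = - exc G F s := by
  have h := (sum_exc_conserves G hF hst univ).symm
  rw [sum_exc_eq_cross] at h
  simp only [Finset.mem_univ, not_true_eq_false, and_false, false_and, Finset.filter_false,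
    Finset.sum_empty, sub_self, if_pos (Finset.mem_univ s), if_pos (Finset.mem_univ t),
    if_true] at h
  linarith

lemma exc_sub (G : Digraph' V E) (F f : E → ℕ) (h : ∀ e, f e ≤ F e) (v : V) :
    exc G (fun e => F e - f e) v = exc G F v - exc G f v := by
  unfold exc
  have k1 : ∑ e ∈ univ.filter (fun e => G.src e = v), ((F e - f e : ℕ) : ℤ)
      = ∑ e ∈ univ.filter (fun e => G.src e = v), (F e : ℤ)
        - ∑ e ∈ univ.filter (fun e => G.src e = v), (f e : ℤ) := by
    rw [← Finset.sum_sub_distrib]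
    exact Finset.sum_congr rfl fun e _ => by
      have := h e; push_cast [Nat.cast_sub this]; ring
  have k2 : ∑ e ∈ univ.filter (fun e => G.tgt e = v), ((F e - f e : ℕ) : ℤ)
      = ∑ e ∈ univ.filter (fun e => G.tgt e = v), (F e : ℤ)
        - ∑ e ∈ univ.filter (fun e => G.tgt e = v), (f e : ℤ) := by
    rw [← Finset.sum_sub_distrib]
    exact Finset.sum_congr rfl fun e _ => by
      have := h e; push_cast [Nat.cast_sub this]; ring
  beta_reduce
  rw [k1, k2]
  ring

lemma sum_flip_up (F : E → ℕ) (e0 : E) (P : E → Prop) [DecidablePred P] :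
    ∑ e ∈ univ.filter P, ((if e = e0 then F e0 + 1 else F e : ℕ) : ℤ)
      = (∑ e ∈ univ.filter P, (F e : ℤ)) + (if P e0 then 1 else 0) := by
  have key : ∀ e, ((if e = e0 then F e0 + 1 else F e : ℕ) : ℤ)
      = (F e : ℤ) + (if e = e0 then 1 else 0) := by
    intro e; by_cases h : e = e0 <;> simp [h]
  rw [Finset.sum_congr rfl (fun e _ => key e), Finset.sum_add_distrib,
    Finset.sum_ite_eq' _ e0 (fun _ => (1 : ℤ))]
  simp [Finset.mem_filter]

lemma sum_flip_down (F : E → ℕ) (e0 : E) (h1 : 1 ≤ F e0) (P : E → Prop) [DecidablePred P] :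
    ∑ e ∈ univ.filter P, ((if e = e0 then F e0 - 1 else F e : ℕ) : ℤ)
      = (∑ e ∈ univ.filter P, (F e : ℤ)) - (if P e0 then 1 else 0) := by
  have key : ∀ e, ((if e = e0 then F e0 - 1 else F e : ℕ) : ℤ)
      = (F e : ℤ) - (if e = e0 then 1 else 0) := by
    intro e; by_cases h : e = e0 <;> simp [h, Nat.cast_sub h1]
  rw [Finset.sum_congr rfl (fun e _ => key e), Finset.sum_sub_distrib,
    Finset.sum_ite_eq' _ e0 (fun _ => (1 : ℤ))]
  simp [Finset.mem_filter]

lemma exc_flip_up (G : Digraph' V E) (F : E → ℕ) (e0 : E) (v : V) :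
    exc G (fun e => if e = e0 then F e0 + 1 else F e) v
      = exc G F v + (if G.src e0 = v then 1 else 0) - (if G.tgt e0 = v then 1 else 0) := by
  unfold exc
  beta_reduce
  rw [sum_flip_up F e0 (fun e => G.src e = v), sum_flip_up F e0 (fun e => G.tgt e = v)]
  ring

lemma exc_flip_down (G : Digraph' V E) (F : E → ℕ) (e0 : E) (h1 : 1 ≤ F e0) (v : V) :
    exc G (fun e => if e = e0 then F e0 - 1 else F e) v
      = exc G F v - (if G.src e0 = v then 1 else 0) + (if G.tgt e0 = v then 1 else 0) := by
  unfold exc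
  beta_reduce
  rw [sum_flip_down F e0 h1 (fun e => G.src e = v), sum_flip_down F e0 h1 (fun e => G.tgt e = v)]
  ring

def rstep (G : Digraph' V E) (lo hi F : E → ℕ) (u v : V) : Prop :=
  ∃ e, (G.src e = u ∧ G.tgt e = v ∧ F e < hi e) ∨ (G.src e = v ∧ G.tgt e = u ∧ lo e < F e)

lemma chain_transfer {r r' : V → V → Prop} :
    ∀ (l : List V) (a : V), List.Chain r a l →
      (∀ x y, x ∈ a :: l → y ∈ l → r x y → r' x y) → List.Chain r' a l := by
  intro l
  induction l with
  | nil => intro a _ _; exact List.Chain.nil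
  | cons c lt ih =>
    intro a hc htr
    cases hc with
    | cons_cons h1 h2 =>
      refine List.Chain.cons (htr a c (by simp) (by simp) h1) (ih c h2 ?_)
      intro x y hx hy hr
      exact htr x y (by simp only [List.mem_cons] at hx ⊢; tauto)
        (by simp only [List.mem_cons]; tauto) hr

lemma chain_dedup {r : V → V → Prop} :
    ∀ (n : ℕ) (l : List V) (a : V), l.length ≤ n → List.Chain r a l →
      ∃ l' : List V, List.Chain r a l' ∧ (a :: l').Nodup ∧
        (a :: l').getLast (List.cons_ne_nil a l') = (a :: l).getLast (List.cons_ne_nil a l) := by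
  intro n
  induction n with
  | zero =>
    intro l a hl _
    have hnil : l = [] := List.eq_nil_of_length_eq_zero (Nat.le_zero.mp hl)
    subst hnil
    exact ⟨[], List.Chain.nil, by simp, rfl⟩
  | succ n ih =>
    intro l a hl hc
    cases l with
    | nil => exact ⟨[], List.Chain.nil, by simp, rfl⟩
    | cons c lt =>
      cases hc with
      | cons_cons h1 h2 =>
        obtain ⟨lt', hch', hnd', hgl'⟩ := ih lt c (by simpa using hl) h2
        by_cases ha : a ∈ c :: lt'
        · obtain ⟨s', t', hsplit⟩ := List.append_of_mem ha
          have hchain_a : List.Chain r a t' := by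
            have hfull : List.Chain r a (c :: lt') := List.Chain.cons h1 hch'
            rw [hsplit] at hfull
            exact (List.isChain_cons_split.mp hfull).2
          have hsub : (a :: t').Sublist (s' ++ a :: t') := List.sublist_append_right s' (a :: t')
          have hnd : (a :: t').Nodup := List.Nodup.sublist hsub (hsplit ▸ hnd')
          refine ⟨t', hchain_a, hnd, ?_⟩
          have h3 : (s' ++ a :: t').getLast (by simp) = (a :: t').getLast (List.cons_ne_nil a t') := by
            rw [List.getLast_append]
            simp
          have e1 : (a :: c :: lt).getLast (List.cons_ne_nil _ _)
              = (c :: lt).getLast (List.cons_ne_nil c lt) := List.getLast_cons _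
          have e2 : (c :: lt').getLast (List.cons_ne_nil c lt')
              = (s' ++ a :: t').getLast (by simp) := by
            have key : ∀ (l₁ l₂ : List V) (h : l₁ = l₂) (h₁ : l₁ ≠ []),
                l₁.getLast h₁ = l₂.getLast (h ▸ h₁) := by
              intro l₁ l₂ h h₁; subst h; rfl
            exact key _ _ hsplit _
          rw [e1, ← hgl', e2, h3]
        · refine ⟨c :: lt', List.Chain.cons h1 hch', by simp [ha, hnd'], ?_⟩
          rw [List.getLast_cons (List.cons_ne_nil c lt'), List.getLast_cons (List.cons_ne_nil c lt)]
          exact hgl'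

lemma augment (G : Digraph' V E) (lo hi : E → ℕ) :
    ∀ (l : List V) (a : V) (F : E → ℕ),
      (∀ e, lo e ≤ F e) → (∀ e, F e ≤ hi e) →
      List.Chain (rstep G lo hi F) a l → (a :: l).Nodup →
      ∃ F' : E → ℕ, (∀ e, lo e ≤ F' e) ∧ (∀ e, F' e ≤ hi e) ∧
        ∀ v, exc G F' v = exc G F v + (if a = v then 1 else 0)
            - (if (a :: l).getLast (List.cons_ne_nil a l) = v then 1 else 0) := by
  intro l
  induction l with
  | nil =>
    intro a F hlo hhi _ _
    exact ⟨F, hlo, hhi, fun v => by simp only [List.getLast_singleton]; by_cases h : a = v <;> simp [h]⟩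
  | cons c lt ih =>
    intro a F hlo hhi hchain hnodup
    have hgl : (a :: c :: lt).getLast (List.cons_ne_nil _ _)
        = (c :: lt).getLast (List.cons_ne_nil c lt) := List.getLast_cons _
    cases hchain with
    | cons_cons hstep hchain' =>
      have hanotin : a ∉ c :: lt := by
        have := hnodup; simp only [List.nodup_cons] at this; exact this.1
      have hndtail : (c :: lt).Nodup := List.Nodup.of_cons hnodup
      obtain ⟨e, he⟩ := hstep
      rcases he with ⟨hsrc, htgt, hcap⟩ | ⟨hsrc, htgt, hcap⟩
      · -- forward use of e : a → c
        set F1 : E → ℕ := fun x => if x = e then F e + 1 else F x with hF1def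
        have hlo1 : ∀ x, lo x ≤ F1 x := by
          intro x; by_cases h : x = e
          · subst h; simp only [hF1def, if_pos rfl]; exact le_trans (hlo x) (Nat.le_succ _)
          · simp only [hF1def, if_neg h]; exact hlo x
        have hhi1 : ∀ x, F1 x ≤ hi x := by
          intro x; by_cases h : x = e
          · subst h; simp only [hF1def, if_pos rfl]; exact hcap
          · simp only [hF1def, if_neg h]; exact hhi x
        have hch1 : List.Chain (rstep G lo hi F1) c lt := by
          refine chain_transfer lt c hchain' ?_
          intro x y hx hy hr
          have hxa : x ≠ a := fun h => hanotin (h ▸ hx)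
          have hya : y ≠ a := fun h => hanotin (h ▸ List.mem_cons_of_mem c hy)
          obtain ⟨e', he'⟩ := hr
          refine ⟨e', ?_⟩
          by_cases heq : e' = e
          · subst heq
            rcases he' with ⟨h1', h2', h3'⟩ | ⟨h1', h2', h3'⟩
            · exact absurd (h1' ▸ hsrc) hxa
            · exact absurd (h1' ▸ hsrc) hya
          · have : F1 e' = F e' := by simp only [hF1def, if_neg heq]
            rw [this]
            exact he'
        obtain ⟨F2, hlo2, hhi2, hexc2⟩ := ih c F1 hlo1 hhi1 hch1 hndtail
        refine ⟨F2, hlo2, hhi2, fun v => ?_⟩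
        have hexc1 : exc G F1 v = exc G F v + (if a = v then 1 else 0)
            - (if c = v then 1 else 0) := by
          rw [hF1def, exc_flip_up, hsrc, htgt]
        rw [hgl, hexc2 v, hexc1]
        ring
      · -- backward use of e : src e = c, tgt e = a, lo e < F e
        set F1 : E → ℕ := fun x => if x = e then F e - 1 else F x with hF1def
        have h1e : 1 ≤ F e := le_trans (Nat.succ_le_succ (Nat.zero_le _)) hcap
        have hlo1 : ∀ x, lo x ≤ F1 x := by
          intro x; by_cases h : x = e
          · subst h; simp only [hF1def, if_pos rfl]; omega
          · simp only [hF1def, if_neg h]; exact hlo x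
        have hhi1 : ∀ x, F1 x ≤ hi x := by
          intro x; by_cases h : x = e
          · subst h; simp only [hF1def, if_pos rfl]
            exact le_trans (Nat.sub_le _ _) (hhi x)
          · simp only [hF1def, if_neg h]; exact hhi x
        have hch1 : List.Chain (rstep G lo hi F1) c lt := by
          refine chain_transfer lt c hchain' ?_
          intro x y hx hy hr
          have hxa : x ≠ a := fun h => hanotin (h ▸ hx)
          have hya : y ≠ a := fun h => hanotin (h ▸ List.mem_cons_of_mem c hy)
          obtain ⟨e', he'⟩ := hr
          refine ⟨e', ?_⟩
          by_cases heq : e' = e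
          · subst heq
            rcases he' with ⟨h1', h2', h3'⟩ | ⟨h1', h2', h3'⟩
            · exact absurd (h2' ▸ htgt) hya
            · exact absurd (h2' ▸ htgt) hxa
          · have : F1 e' = F e' := by simp only [hF1def, if_neg heq]
            rw [this]
            exact he'
        obtain ⟨F2, hlo2, hhi2, hexc2⟩ := ih c F1 hlo1 hhi1 hch1 hndtail
        refine ⟨F2, hlo2, hhi2, fun v => ?_⟩
        have hexc1 : exc G F1 v = exc G F v - (if c = v then 1 else 0)
            + (if a = v then 1 else 0) := by
          rw [hF1def, exc_flip_down G F e h1e, hsrc, htgt]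
        rw [hgl, hexc2 v, hexc1]
        ring

lemma flow_exists (G : Digraph' V E) (s t : V) (hst : s ≠ t) (hi : E → ℕ) :
    ∀ (m : ℕ), (∀ C : Finset E, G.IsCut s t C → (m : ℤ) ≤ ∑ e ∈ C, (hi e : ℤ)) →
      ∃ F : E → ℕ, (∀ e, F e ≤ hi e) ∧ G.Conserves s t F ∧ G.flowValue s F = (m : ℤ) := by
  intro m
  induction m with
  | zero =>
    intro _
    refine ⟨fun _ => 0, fun e => Nat.zero_le _, fun v _ _ => by simp, ?_⟩
    unfold Digraph'.flowValue; simp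
  | succ m ihm =>
    intro hcut
    obtain ⟨F, hFhi, hFc, hFv⟩ := ihm (fun C hC => le_trans (by push_cast; omega) (hcut C hC))
    classical
    by_cases hreach : Relation.ReflTransGen (rstep G (fun _ => 0) hi F) s t
    · obtain ⟨l0, hch0, hgl0⟩ := List.exists_isChain_cons_of_relationReflTransGen hreach
      obtain ⟨l, hch, hnd, hgl⟩ := chain_dedup l0.length l0 s le_rfl hch0
      obtain ⟨F', _, hhi', hexc⟩ :=
        augment G (fun _ => 0) hi l s F (fun e => Nat.zero_le _) hFhi hch hnd
      have hglt : (s :: l).getLast (List.cons_ne_nil s l) = t := by rw [hgl, hgl0]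
      refine ⟨F', hhi', ?_, ?_⟩
      · rw [conserves_iff_exc]
        intro v hvs hvt
        have hz := (conserves_iff_exc G s t F).1 hFc v hvs hvt
        rw [hexc v, hglt, hz]
        simp [Ne.symm hvs, Ne.symm hvt]
      · rw [flowValue_eq_exc, hexc s, hglt, ← flowValue_eq_exc, hFv]
        simp only [if_pos rfl, if_neg (Ne.symm hst)]
        push_cast; ring
    · exfalso
      set S : Finset V :=
        univ.filter (fun v => Relation.ReflTransGen (rstep G (fun _ => 0) hi F) s v) with hS
      have hsS : s ∈ S := by simp only [hS, Finset.mem_filter, Finset.mem_univ, true_and]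
                             exact Relation.ReflTransGen.refl
      have htS : t ∉ S := by simp only [hS, Finset.mem_filter, Finset.mem_univ, true_and]
                             exact hreach
      have hclosed : ∀ x y, x ∈ S → rstep G (fun _ => 0) hi F x y → y ∈ S := by
        intro x y hx hstep
        simp only [hS, Finset.mem_filter, Finset.mem_univ, true_and] at hx ⊢
        exact hx.tail hstep
      set C : Finset E := univ.filter (fun e => G.src e ∈ S ∧ G.tgt e ∉ S) with hC
      have hCcut : G.IsCut s t C := by
        intro hR
        have key : ∀ v, G.ReachAvoid C s v → v ∈ S := by
          intro v hv
          induction hv with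
          | refl => exact hsS
          | tail h1 h2 ih2 =>
            obtain ⟨e, heC, hs', ht'⟩ := h2
            by_contra hvS
            exact heC (by simp only [hC, Finset.mem_filter, Finset.mem_univ, true_and]
                          exact ⟨hs' ▸ ih2, ht' ▸ hvS⟩)
        exact htS (key t hR)
      have h1 : ∑ v ∈ S, exc G F v = (m : ℤ) := by
        rw [sum_exc_conserves G hFc hst S, if_pos hsS, if_neg htS, ← flowValue_eq_exc, hFv]
        ring
      have h2 := sum_exc_eq_cross G F S
      have hout : ∀ e ∈ univ.filter (fun e => G.src e ∈ S ∧ G.tgt e ∉ S), (F e : ℤ) = (hi e : ℤ) := by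
        intro e he
        simp only [Finset.mem_filter, Finset.mem_univ, true_and] at he
        by_contra hne
        have hlt : F e < hi e := lt_of_le_of_ne (hFhi e) (by exact_mod_cast hne)
        exact he.2 (hclosed _ _ he.1 ⟨e, Or.inl ⟨rfl, rfl, hlt⟩⟩)
      have hin : ∀ e ∈ univ.filter (fun e => G.src e ∉ S ∧ G.tgt e ∈ S), (F e : ℤ) = 0 := by
        intro e he
        simp only [Finset.mem_filter, Finset.mem_univ, true_and] at he
        by_contra hne
        have hpos : 0 < F e := Nat.pos_of_ne_zero (by exact_mod_cast hne)
        exact he.1 (hclosed _ _ he.2 ⟨e, Or.inr ⟨rfl, rfl, hpos⟩⟩)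
      have hcap : (m : ℤ) = ∑ e ∈ C, (hi e : ℤ) := by
        rw [← h1, h2, Finset.sum_congr rfl hout, Finset.sum_congr rfl hin]
        simp [hC]
      have := hcut C hCcut
      rw [← hcap] at this
      push_cast at this
      omega

lemma val_le_cut (G : Digraph' V E) {s t : V} (hst : s ≠ t) {f : E → ℕ} (hf : G.IsFlow s t f)
    {C : Finset E} (hC : G.IsCut s t C) : G.flowValue s f ≤ (C.card : ℤ) := by
  classical
  set S : Finset V := univ.filter (fun v => G.ReachAvoid C s v) with hS
  have hsS : s ∈ S := by simp only [hS, Finset.mem_filter, Finset.mem_univ, true_and]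
                         exact Relation.ReflTransGen.refl
  have htS : t ∉ S := by simp only [hS, Finset.mem_filter, Finset.mem_univ, true_and]
                         exact hC
  have h1 : ∑ v ∈ S, exc G f v = G.flowValue s f := by
    rw [sum_exc_conserves G hf.2 hst S, if_pos hsS, if_neg htS, ← flowValue_eq_exc]
    ring
  have h2 := sum_exc_eq_cross G f S
  have hsub : univ.filter (fun e => G.src e ∈ S ∧ G.tgt e ∉ S) ⊆ C := by
    intro e he
    simp only [hS, Finset.mem_filter, Finset.mem_univ, true_and] at he
    by_contra heC
    exact he.2 (he.1.tail ⟨e, heC, rfl, rfl⟩)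
  calc G.flowValue s f
      = (∑ e ∈ univ.filter (fun e => G.src e ∈ S ∧ G.tgt e ∉ S), (f e : ℤ))
        - ∑ e ∈ univ.filter (fun e => G.src e ∉ S ∧ G.tgt e ∈ S), (f e : ℤ) := by
        rw [← h1, h2]
    _ ≤ ∑ e ∈ univ.filter (fun e => G.src e ∈ S ∧ G.tgt e ∉ S), (f e : ℤ) := by
        have : (0:ℤ) ≤ ∑ e ∈ univ.filter (fun e => G.src e ∉ S ∧ G.tgt e ∈ S), (f e : ℤ) :=
          Finset.sum_nonneg fun e _ => by positivity
        linarith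
    _ ≤ ∑ e ∈ C, (f e : ℤ) :=
        Finset.sum_le_sum_of_subset_of_nonneg hsub (fun e _ _ => by positivity)
    _ ≤ ∑ e ∈ C, (1 : ℤ) := Finset.sum_le_sum fun e _ => by exact_mod_cast hf.1 e
    _ = (C.card : ℤ) := by simp

lemma fixup (G : Digraph' V E) {s t : V} (hst : s ≠ t) (k w : ℕ) (hk : 1 ≤ k) (F : E → ℕ)
    (hFk : ∀ e, F e ≤ k) (hFc : G.Conserves s t F)
    (hFv : G.flowValue s F = ((k * w : ℕ) : ℤ)) :
    ∀ (n : ℕ) (f : E → ℕ), (univ.filter (fun e => F e = k ∧ f e = 0)).card ≤ n →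
      (∀ e, f e ≤ min (F e) 1) → G.Conserves s t f → G.flowValue s f = (w : ℤ) →
      ∃ f' : E → ℕ, (∀ e, f' e ≤ min (F e) 1) ∧ G.Conserves s t f' ∧
        G.flowValue s f' = (w : ℤ) ∧ ∀ e, F e = k → f' e = 1 := by
  classical
  intro n
  induction n with
  | zero =>
    intro f hcard hfb hfc hfv
    refine ⟨f, hfb, hfc, hfv, fun e hFe => ?_⟩
    have hempty : (univ.filter (fun e => F e = k ∧ f e = 0)) = ∅ :=
      Finset.card_eq_zero.mp (Nat.le_zero.mp hcard)
    have hnm : e ∉ (univ.filter (fun e => F e = k ∧ f e = 0)) := hempty ▸ Finset.notMem_empty e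
    simp only [Finset.mem_filter, Finset.mem_univ, true_and, not_and] at hnm
    have h1 := hnm hFe
    have h2 := hfb e
    omega
  | succ n ih =>
    intro f hcard hfb hfc hfv
    by_cases hempty : (univ.filter (fun e => F e = k ∧ f e = 0)) = ∅
    · refine ⟨f, hfb, hfc, hfv, fun e hFe => ?_⟩
      have hnm : e ∉ (univ.filter (fun e => F e = k ∧ f e = 0)) := hempty ▸ Finset.notMem_empty e
      simp only [Finset.mem_filter, Finset.mem_univ, true_and, not_and] at hnm
      have h1 := hnm hFe
      have h2 := hfb e
      omega
    · obtain ⟨e0, he0⟩ := Finset.nonempty_iff_ne_empty.mpr hempty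
      have he0' := he0
      simp only [Finset.mem_filter, Finset.mem_univ, true_and] at he0'
      obtain ⟨hFe0, hfe0⟩ := he0'
      have hcard1 : 1 ≤ (univ.filter (fun e => F e = k ∧ f e = 0)).card :=
        Finset.card_pos.mpr ⟨e0, he0⟩
      set f1 : E → ℕ := fun e => if e = e0 then f e0 + 1 else f e with hf1def
      have hf1e0 : f1 e0 = 1 := by simp only [hf1def, if_pos rfl, hfe0]
      have hf1other : ∀ e, e ≠ e0 → f1 e = f e := fun e h => by simp only [hf1def, if_neg h]
      have hmine0 : min (F e0) 1 = 1 := by rw [hFe0]; exact min_eq_right hk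
      have hexcf1 : ∀ v, exc G f1 v = exc G f v + (if G.src e0 = v then 1 else 0)
          - (if G.tgt e0 = v then 1 else 0) := fun v => by
        rw [hf1def, exc_flip_up]
      have hf1b : ∀ e, f1 e ≤ min (F e) 1 := by
        intro e
        by_cases h : e = e0
        · subst h; rw [hf1e0, hmine0]
        · rw [hf1other e h]; exact hfb e
      by_cases huv : G.src e0 = G.tgt e0
      · -- self-loop: flipping e0 changes nothing in excess
        have hexc : ∀ v, exc G f1 v = exc G f v := fun v => by rw [hexcf1 v, huv]; ring
        have hsub : (univ.filter (fun e => F e = k ∧ f1 e = 0))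
            ⊆ (univ.filter (fun e => F e = k ∧ f e = 0)).erase e0 := by
          intro e he
          simp only [Finset.mem_filter, Finset.mem_univ, true_and] at he
          have hne : e ≠ e0 := by intro h; rw [h, hf1e0] at he; omega
          rw [Finset.mem_erase]
          refine ⟨hne, ?_⟩
          simp only [Finset.mem_filter, Finset.mem_univ, true_and]
          exact ⟨he.1, (hf1other e hne) ▸ he.2⟩
        have hcard2 : (univ.filter (fun e => F e = k ∧ f1 e = 0)).card ≤ n := by
          have := Finset.card_le_card hsub
          rw [Finset.card_erase_of_mem he0] at this
          omega
        have hf1c : G.Conserves s t f1 := by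
          rw [conserves_iff_exc]
          intro v hvs hvt
          rw [hexc v]
          exact (conserves_iff_exc G s t f).1 hfc v hvs hvt
        have hf1v : G.flowValue s f1 = (w : ℤ) := by
          rw [flowValue_eq_exc, hexc s, ← flowValue_eq_exc, hfv]
        exact ih f1 hcard2 hf1b hf1c hf1v
      · -- main case
        set lo : E → ℕ := fun e => if e = e0 then 1 else if F e = k then f e else 0 with hlodef
        set hi : E → ℕ := fun e => min (F e) 1 with hhidef
        have hlo1 : ∀ e, lo e ≤ f1 e := by
          intro e
          by_cases h : e = e0
          · subst h; rw [hf1e0]; simp only [hlodef, if_pos rfl]; exact le_refl 1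
          · rw [hf1other e h]; simp only [hlodef, if_neg h]
            by_cases h2 : F e = k <;> simp [h2]
        have hhi1 : ∀ e, f1 e ≤ hi e := hf1b
        have hreach : Relation.ReflTransGen (rstep G lo hi f1) (G.tgt e0) (G.src e0) := by
          by_contra hnr
          set S : Finset V :=
            univ.filter (fun v => Relation.ReflTransGen (rstep G lo hi f1) (G.tgt e0) v) with hS
          have hv0S : G.tgt e0 ∈ S := by
            simp only [hS, Finset.mem_filter, Finset.mem_univ, true_and]
            exact Relation.ReflTransGen.refl
          have hu0S : G.src e0 ∉ S := by
            simp only [hS, Finset.mem_filter, Finset.mem_univ, true_and]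
            exact hnr
          have hclosed : ∀ x y, x ∈ S → rstep G lo hi f1 x y → y ∈ S := by
            intro x y hx hstep
            simp only [hS, Finset.mem_filter, Finset.mem_univ, true_and] at hx ⊢
            exact hx.tail hstep
          -- sum identities
          have s1 : ∑ v ∈ S, exc G f1 v
              = ((if s ∈ S then (1:ℤ) else 0) - (if t ∈ S then (1:ℤ) else 0)) * w - 1 := by
            have : ∀ v ∈ S, exc G f1 v = exc G f v + (if G.src e0 = v then 1 else 0)
                - (if G.tgt e0 = v then 1 else 0) := fun v _ => hexcf1 v
            rw [Finset.sum_congr rfl this]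
            have hsplit : ∑ v ∈ S, (exc G f v + (if G.src e0 = v then 1 else 0)
                - (if G.tgt e0 = v then 1 else 0))
                = (∑ v ∈ S, exc G f v) + (∑ v ∈ S, (if G.src e0 = v then 1 else 0))
                  - ∑ v ∈ S, (if G.tgt e0 = v then 1 else 0) := by
              rw [Finset.sum_sub_distrib, Finset.sum_add_distrib]
            rw [hsplit, Finset.sum_ite_eq S (G.src e0) (fun _ => (1:ℤ)),
              Finset.sum_ite_eq S (G.tgt e0) (fun _ => (1:ℤ)),
              if_neg hu0S, if_pos hv0S,
              sum_exc_conserves G hfc hst S]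
            have hes : exc G f s = (w : ℤ) := hfv
            have het : exc G f t = -(w : ℤ) := by rw [exc_t G hfc hst, hes]
            rw [hes, het]
            split_ifs <;> ring
          have s2 : ∑ v ∈ S, exc G F v
              = (((if s ∈ S then (1:ℤ) else 0) - (if t ∈ S then (1:ℤ) else 0)) * w) * k := by
            rw [sum_exc_conserves G hFc hst S]
            have hes : exc G F s = ((k*w : ℕ) : ℤ) := hFv
            have het : exc G F t = -((k*w : ℕ) : ℤ) := by rw [exc_t G hFc hst, hes]
            rw [hes, het]
            split_ifs <;> push_cast <;> ring
          have cross1 := sum_exc_eq_cross G f1 S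
          have cross2 := sum_exc_eq_cross G F S
          -- pointwise bounds
          have hout : ∀ e ∈ univ.filter (fun e => G.src e ∈ S ∧ G.tgt e ∉ S),
              (F e : ℤ) ≤ (k : ℤ) * (f1 e : ℤ) := by
            intro e he
            simp only [Finset.mem_filter, Finset.mem_univ, true_and] at he
            have hnofwd : ¬ f1 e < hi e := by
              intro hlt
              exact he.2 (hclosed _ _ he.1 ⟨e, Or.inl ⟨rfl, rfl, hlt⟩⟩)
            rcases Nat.eq_zero_or_pos (F e) with h0 | hpos
            · simp only [h0, Nat.cast_zero]
              positivity
            · have hhie : hi e = 1 := by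
                simp only [hhidef]; exact min_eq_right hpos
              have : 1 ≤ f1 e := by omega
              have hFke := hFk e
              have : (F e : ℤ) ≤ (k : ℤ) := by exact_mod_cast hFke
              calc (F e : ℤ) ≤ (k : ℤ) := this
                _ ≤ (k : ℤ) * (f1 e : ℤ) := by
                    have h1 : (1:ℤ) ≤ (f1 e : ℤ) := by exact_mod_cast ‹1 ≤ f1 e›
                    nlinarith [Int.ofNat_nonneg k]
          have hin : ∀ e ∈ univ.filter (fun e => ¬ G.src e ∈ S ∧ G.tgt e ∈ S),
              (k : ℤ) * (f1 e : ℤ) ≤ (F e : ℤ) := by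
            intro e he
            simp only [Finset.mem_filter, Finset.mem_univ, true_and] at he
            have hnobwd : ¬ lo e < f1 e := by
              intro hlt
              exact he.1 (hclosed _ _ he.2 ⟨e, Or.inr ⟨rfl, rfl, hlt⟩⟩)
            have hle : f1 e ≤ lo e := Nat.le_of_not_lt hnobwd
            rcases Nat.eq_zero_or_pos (f1 e) with h0 | hpos
            · simp only [h0, Nat.cast_zero, mul_zero]
              positivity
            · have hloe : 1 ≤ lo e := le_trans hpos hle
              have hFek : F e = k := by
                by_cases h : e = e0
                · rw [h]; exact hFe0
                · simp only [hlodef, if_neg h] at hloe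
                  by_cases h2 : F e = k
                  · exact h2
                  · simp [h2] at hloe
              have hf1le : f1 e ≤ 1 := le_trans (hf1b e) (min_le_right _ _)
              have : f1 e = 1 := by omega
              rw [this, hFek]
              simp
          have hOF : ∑ e ∈ univ.filter (fun e => G.src e ∈ S ∧ G.tgt e ∉ S), (F e : ℤ)
              ≤ (k:ℤ) * ∑ e ∈ univ.filter (fun e => G.src e ∈ S ∧ G.tgt e ∉ S), (f1 e : ℤ) := by
            rw [Finset.mul_sum]
            exact Finset.sum_le_sum hout
          have hIF : (k:ℤ) * ∑ e ∈ univ.filter (fun e => ¬ G.src e ∈ S ∧ G.tgt e ∈ S), (f1 e : ℤ)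
              ≤ ∑ e ∈ univ.filter (fun e => ¬ G.src e ∈ S ∧ G.tgt e ∈ S), (F e : ℤ) := by
            rw [Finset.mul_sum]
            exact Finset.sum_le_sum hin
          set Of1 := ∑ e ∈ univ.filter (fun e => G.src e ∈ S ∧ G.tgt e ∉ S), (f1 e : ℤ)
          set If1 := ∑ e ∈ univ.filter (fun e => ¬ G.src e ∈ S ∧ G.tgt e ∈ S), (f1 e : ℤ)
          set OF := ∑ e ∈ univ.filter (fun e => G.src e ∈ S ∧ G.tgt e ∉ S), (F e : ℤ)
          set IF := ∑ e ∈ univ.filter (fun e => ¬ G.src e ∈ S ∧ G.tgt e ∈ S), (F e : ℤ)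
          set σ : ℤ := (if s ∈ S then (1:ℤ) else 0) - (if t ∈ S then (1:ℤ) else 0) with hσ
          have e1 : Of1 - If1 = σ * w - 1 := by rw [← cross1, s1]
          have e2 : OF - IF = σ * w * k := by rw [← cross2, s2]
          have e5 : (k:ℤ) * (Of1 - If1) = σ * w * k - k := by rw [e1]; ring
          have e6 : (k:ℤ) * Of1 - (k:ℤ) * If1 = (k:ℤ) * (Of1 - If1) := by ring
          have hk' : (1:ℤ) ≤ (k:ℤ) := by exact_mod_cast hk
          linarith
        -- now we have the augmenting walk
        obtain ⟨l0, hch0, hgl0⟩ := List.exists_isChain_cons_of_relationReflTransGen hreach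
        obtain ⟨l, hch, hnd, hgl⟩ := chain_dedup l0.length l0 (G.tgt e0) le_rfl hch0
        obtain ⟨f2, hlo2, hhi2, hexc2⟩ := augment G lo hi l (G.tgt e0) f1 hlo1 hhi1 hch hnd
        have hglt : ((G.tgt e0) :: l).getLast (List.cons_ne_nil _ l) = G.src e0 := by
          rw [hgl, hgl0]
        have hexcf2 : ∀ v, exc G f2 v = exc G f v := by
          intro v
          rw [hexc2 v, hglt, hexcf1 v]
          ring
        have hf2c : G.Conserves s t f2 := by
          rw [conserves_iff_exc]
          intro v hvs hvt
          rw [hexcf2 v]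
          exact (conserves_iff_exc G s t f).1 hfc v hvs hvt
        have hf2v : G.flowValue s f2 = (w : ℤ) := by
          rw [flowValue_eq_exc, hexcf2 s, ← flowValue_eq_exc, hfv]
        have hf2e0 : f2 e0 = 1 := by
          have h1 := hlo2 e0
          have h2 := hhi2 e0
          simp only [hlodef, if_pos rfl] at h1
          simp only [hhidef, hmine0] at h2
          omega
        have hsub : (univ.filter (fun e => F e = k ∧ f2 e = 0))
            ⊆ (univ.filter (fun e => F e = k ∧ f e = 0)).erase e0 := by
          intro e he
          simp only [Finset.mem_filter, Finset.mem_univ, true_and] at he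
          have hne : e ≠ e0 := by intro h; rw [h, hf2e0] at he; omega
          rw [Finset.mem_erase]
          refine ⟨hne, ?_⟩
          simp only [Finset.mem_filter, Finset.mem_univ, true_and]
          obtain ⟨heF, hef2⟩ := he
          refine ⟨heF, ?_⟩
          have h1 := hlo2 e
          simp only [hlodef, if_neg hne] at h1
          rw [if_pos heF] at h1
          omega
        have hcard2 : (univ.filter (fun e => F e = k ∧ f2 e = 0)).card ≤ n := by
          have := Finset.card_le_card hsub
          rw [Finset.card_erase_of_mem he0] at this
          omega
        exact ih f2 hcard2 (fun e => by have := hhi2 e; simpa [hhidef] using this) hf2c hf2v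

lemma peel (G : Digraph' V E) {s t : V} (hst : s ≠ t) (w : ℕ) :
    ∀ (k : ℕ) (F : E → ℕ), (∀ e, F e ≤ k) → G.Conserves s t F →
      G.flowValue s F = ((k * w : ℕ) : ℤ) →
      ∃ A : Fin k → E → ℕ, (∀ i, G.IsFlow s t (A i) ∧ G.flowValue s (A i) = (w : ℤ)) ∧
        ∀ e, (∑ i, A i e) ≤ F e := by
  intro k
  induction k with
  | zero =>
    intro F _ _ _
    exact ⟨fun i => i.elim0, fun i => i.elim0, fun e => by simp⟩
  | succ k ihk =>
    intro F hFk hFc hFv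
    classical
    have hcut : ∀ C : Finset E, G.IsCut s t C →
        (w : ℤ) ≤ ∑ e ∈ C, ((min (F e) 1 : ℕ) : ℤ) := by
      intro C hC
      set S : Finset V := univ.filter (fun v => G.ReachAvoid C s v) with hS
      have hsS : s ∈ S := by
        simp only [hS, Finset.mem_filter, Finset.mem_univ, true_and]
        exact Relation.ReflTransGen.refl
      have htS : t ∉ S := by
        simp only [hS, Finset.mem_filter, Finset.mem_univ, true_and]
        exact hC
      have h1 : ∑ v ∈ S, exc G F v = (((k+1) * w : ℕ) : ℤ) := by
        rw [sum_exc_conserves G hFc hst S, if_pos hsS, if_neg htS, ← flowValue_eq_exc, hFv]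
        ring
      have h2 := sum_exc_eq_cross G F S
      have hsub : univ.filter (fun e => G.src e ∈ S ∧ G.tgt e ∉ S) ⊆ C := by
        intro e he
        simp only [hS, Finset.mem_filter, Finset.mem_univ, true_and] at he
        by_contra heC
        exact he.2 (he.1.tail ⟨e, heC, rfl, rfl⟩)
      have key : (((k+1) * w : ℕ) : ℤ)
          ≤ (k+1 : ℤ) * ∑ e ∈ C, ((min (F e) 1 : ℕ) : ℤ) := by
        calc (((k+1) * w : ℕ) : ℤ)
            = ∑ v ∈ S, exc G F v := h1.symm
          _ ≤ ∑ e ∈ univ.filter (fun e => G.src e ∈ S ∧ G.tgt e ∉ S), (F e : ℤ) := by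
              rw [h2]
              have : (0:ℤ) ≤ ∑ e ∈ univ.filter (fun e => ¬ G.src e ∈ S ∧ G.tgt e ∈ S), (F e : ℤ) :=
                Finset.sum_nonneg fun e _ => by positivity
              linarith
          _ ≤ ∑ e ∈ univ.filter (fun e => G.src e ∈ S ∧ G.tgt e ∉ S),
                (k+1 : ℤ) * ((min (F e) 1 : ℕ) : ℤ) := by
              refine Finset.sum_le_sum fun e _ => ?_
              have hFke := hFk e
              rcases Nat.eq_zero_or_pos (F e) with h0 | hpos
              · simp [h0]
              · rw [min_eq_right hpos]
                push_cast
                omega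
          _ ≤ ∑ e ∈ C, (k+1 : ℤ) * ((min (F e) 1 : ℕ) : ℤ) :=
              Finset.sum_le_sum_of_subset_of_nonneg hsub (fun e _ _ => by positivity)
          _ = (k+1 : ℤ) * ∑ e ∈ C, ((min (F e) 1 : ℕ) : ℤ) := by rw [← Finset.mul_sum]
      have hk1 : (0:ℤ) < (k+1 : ℤ) := by positivity
      have := key
      push_cast at this ⊢
      nlinarith
    obtain ⟨f0, hf0hi, hf0c, hf0v⟩ := flow_exists G s t hst (fun e => min (F e) 1) w hcut
    obtain ⟨f, hfhi, hfc, hfv, hfull⟩ := fixup G hst (k+1) w (Nat.succ_le_succ (Nat.zero_le k))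
      F hFk hFc hFv _ f0 le_rfl hf0hi hf0c hf0v
    have hfF : ∀ e, f e ≤ F e := fun e => le_trans (hfhi e) (min_le_left _ _)
    set F' : E → ℕ := fun e => F e - f e with hF'def
    have hF'k : ∀ e, F' e ≤ k := by
      intro e
      by_cases h : F e = k + 1
      · have := hfull e h
        simp only [hF'def]
        omega
      · have := hFk e
        simp only [hF'def]
        omega
    have hF'c : G.Conserves s t F' := by
      rw [conserves_iff_exc]
      intro v hvs hvt
      rw [hF'def, exc_sub G F f hfF v,
        (conserves_iff_exc G s t F).1 hFc v hvs hvt,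
        (conserves_iff_exc G s t f).1 hfc v hvs hvt]
      ring
    have hF'v : G.flowValue s F' = ((k * w : ℕ) : ℤ) := by
      rw [flowValue_eq_exc, hF'def, exc_sub G F f hfF s, ← flowValue_eq_exc, ← flowValue_eq_exc,
        hFv, hfv]
      push_cast
      ring
    obtain ⟨A', hA', hA'sum⟩ := ihk F' hF'k hF'c hF'v
    refine ⟨Fin.cons f A', ?_, ?_⟩
    · intro i
      refine Fin.cases ?_ ?_ i
      · refine ⟨⟨fun e => le_trans (hfhi e) (min_le_right _ _), hfc⟩, hfv⟩
      · intro j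
        simpa using hA' j
    · intro e
      rw [Fin.sum_univ_succ]
      simp only [Fin.cons_zero, Fin.cons_succ]
      have h1 := hA'sum e
      have h2 := hfF e
      simp only [hF'def] at h1
      omega

end StmtAux


/-- If `λ` is the value of a maximum `(s,t)`-flow of `G`, then there
exists a family `A = {f_1, …, f_{λ+1}}` of `λ+1` maximum `(s,t)`-flows of `G` such that
for every non-critical edge `e` there is an index `i` with `f_i e = 0`. -/
theorem stmt0 {V E : Type} [Fintype V] [DecidableEq V] [Fintype E] [DecidableEq E]
    (G : Digraph' V E) (s t : V) (hst : s ≠ t) (lam : ℕ)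
    (hmax : G.IsMaxFlowValue s t ∅ lam) :
    ∃ A : Fin (lam + 1) → E → ℕ,
      (∀ i, G.IsFlow s t (A i) ∧ G.flowValue s (A i) = lam) ∧
      ∀ e : E, ¬ G.Critical s t e → ∃ i, A i e = 0 := by

  classical
  obtain ⟨⟨f0, hf0flow, _, hf0v⟩, _⟩ := hmax
  set c : E → ℕ := fun e => if G.Critical s t e then lam + 1 else lam with hcdef
  have hlam_le : ∀ C : Finset E, G.IsCut s t C → lam ≤ C.card := by
    intro C hC
    have h := StmtAux.val_le_cut G hst hf0flow hC
    rw [hf0v] at h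
    exact_mod_cast h
  have hcut : ∀ C : Finset E, G.IsCut s t C →
      (((lam + 1) * lam : ℕ) : ℤ) ≤ ∑ e ∈ C, (c e : ℤ) := by
    intro C hC
    by_cases hcard : C.card = lam
    · have hmincut : G.IsMinCut s t C := ⟨hC, fun C' hC' => hcard ▸ hlam_le C' hC'⟩
      have hall : ∀ e ∈ C, (c e : ℤ) = ((lam + 1 : ℕ) : ℤ) := by
        intro e he
        have : G.Critical s t e := ⟨C, hmincut, he⟩
        simp [hcdef, this]
      rw [Finset.sum_congr rfl hall, Finset.sum_const, hcard]
      push_cast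
      ring_nf
      omega
    · have h1 : lam + 1 ≤ C.card := by
        have := hlam_le C hC
        omega
      have hge : ∀ e ∈ C, ((lam : ℕ) : ℤ) ≤ (c e : ℤ) := by
        intro e _
        simp only [hcdef]
        split_ifs <;> push_cast <;> omega
      calc (((lam + 1) * lam : ℕ) : ℤ) ≤ (C.card : ℤ) * (lam : ℤ) := by
            push_cast
            have : (lam + 1 : ℤ) ≤ (C.card : ℤ) := by exact_mod_cast h1
            nlinarith [Int.ofNat_nonneg lam]
        _ ≤ ∑ e ∈ C, (c e : ℤ) := by
            calc (C.card : ℤ) * (lam : ℤ) = ∑ _e ∈ C, (lam : ℤ) := by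
                  rw [Finset.sum_const]; ring
              _ ≤ ∑ e ∈ C, (c e : ℤ) := Finset.sum_le_sum (fun e he => by
                  have := hge e he; push_cast at this ⊢; omega)
  obtain ⟨F, hFc_le, hFcons, hFval⟩ :=
    StmtAux.flow_exists G s t hst c ((lam + 1) * lam) hcut
  have hFk : ∀ e, F e ≤ lam + 1 := by
    intro e
    refine le_trans (hFc_le e) ?_
    simp only [hcdef]
    split_ifs <;> omega
  obtain ⟨A, hA, hAsum⟩ := StmtAux.peel G hst lam (lam + 1) F hFk hFcons hFval
  refine ⟨A, hA, ?_⟩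
  intro e he
  have hce : c e = lam := by simp [hcdef, he]
  have hFe : F e ≤ lam := hce ▸ hFc_le e
  by_contra hno
  push_neg at hno
  have hone : ∀ i, 1 ≤ A i e := fun i => Nat.one_le_iff_ne_zero.mpr (hno i)
  have hsum : (lam + 1) ≤ ∑ i, A i e := by
    calc (lam + 1) = (univ : Finset (Fin (lam + 1))).card • 1 := by simp
      _ ≤ ∑ i, A i e := Finset.card_nsmul_le_sum univ _ 1 (fun i _ => hone i)
  have := hAsum e
  omega
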